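/- Alternative-definition monotonicity and Lipschitz bound: Let L be a graph Laplacian and s ∈ R^n with ||s|| ≤ R. Define PD(α) = α·s̄^T(I+α^{-1}L)^{-1}s̄ with s̄ = s - ((s^T 1)/n)·1. Then for any 0 < α ≤ β, PD(α) ≤ PD(β) and PD(β) - PD(α) ≤ (β - α)R^2. -/

import Mathlib

open Matrix Finset

-- scalar lemmas
lemma g_diff_nonneg {α β lam : ℝ} (hα : 0 < α) (hαβ : α ≤ β) (hlam : 0 ≤ lam) :
    0 ≤ β * (1 + β⁻¹ * lam)⁻¹ - α * (1 + α⁻¹ * lam)⁻¹ := by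
  have hβ : 0 < β := lt_of_lt_of_le hα hαβ
  have h1 : α * (1 + α⁻¹ * lam)⁻¹ = α^2 / (α + lam) := by
    rw [eq_div_iff (by positivity)]
    field_simp
  have h2 : β * (1 + β⁻¹ * lam)⁻¹ = β^2 / (β + lam) := by
    rw [eq_div_iff (by positivity)]
    field_simp
  rw [h1, h2, sub_nonneg, div_le_div_iff₀ (by positivity) (by positivity)]
  nlinarith [mul_nonneg (mul_nonneg hα.le hβ.le) (sub_nonneg.2 hαβ), mul_nonneg (mul_nonneg hlam (sub_nonneg.2 hαβ)) (by linarith : (0:ℝ) ≤ α + β)]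

lemma g_diff_le {α β lam : ℝ} (hα : 0 < α) (hαβ : α ≤ β) (hlam : 0 ≤ lam) :
    β * (1 + β⁻¹ * lam)⁻¹ - α * (1 + α⁻¹ * lam)⁻¹ ≤ β - α := by
  have hβ : 0 < β := lt_of_lt_of_le hα hαβ
  have h1 : α * (1 + α⁻¹ * lam)⁻¹ = α^2 / (α + lam) := by
    rw [eq_div_iff (by positivity)]; field_simp
  have h2 : β * (1 + β⁻¹ * lam)⁻¹ = β^2 / (β + lam) := by
    rw [eq_div_iff (by positivity)]; field_simp
  rw [h1, h2, div_sub_div _ _ (by positivity : (β:ℝ) + lam ≠ 0) (by positivity : (α:ℝ) + lam ≠ 0),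
    div_le_iff₀ (by positivity)]
  nlinarith [sq_nonneg lam, mul_nonneg hlam hlam]

-- key reduction: PD(γ) as weighted sum over eigenvalues
lemma PD_eq {n : ℕ} {L : Matrix (Fin n) (Fin n) ℝ} (hL : L.PosSemidef)
    (v : Fin n → ℝ) {γ : ℝ} (hγ : 0 < γ) :
    γ * (v ⬝ᵥ ((1 + γ⁻¹ • L)⁻¹ *ᵥ v)) =
      ∑ i, (γ * (1 + γ⁻¹ * hL.1.eigenvalues i)⁻¹) *
        ((star (hL.1.eigenvectorUnitary : Matrix (Fin n) (Fin n) ℝ) *ᵥ v) i)^2 := by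
  set U : Matrix (Fin n) (Fin n) ℝ := (hL.1.eigenvectorUnitary : Matrix (Fin n) (Fin n) ℝ) with hUdef
  set lam := hL.1.eigenvalues with hlamdef
  have hofReal : (RCLike.ofReal ∘ lam : Fin n → ℝ) = lam := by ext i; simp
  have hUU : U * star U = 1 := (Matrix.mem_unitaryGroup_iff).mp hL.1.eigenvectorUnitary.2
  have hUU' : star U * U = 1 := (Matrix.mem_unitaryGroup_iff').mp hL.1.eigenvectorUnitary.2
  have hspec : L = U * diagonal lam * star U := by
    rw [← hofReal]; exact hL.1.spectral_theorem
  have hpos : ∀ i, (0:ℝ) < 1 + γ⁻¹ * lam i := fun i => by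
    have := hL.eigenvalues_nonneg i
    positivity
  -- M = U * diagonal d * star U where d i = 1 + γ⁻¹ lam i
  have hM : (1 : Matrix (Fin n) (Fin n) ℝ) + γ⁻¹ • L =
      U * diagonal (fun i => 1 + γ⁻¹ * lam i) * star U := by
    have : diagonal (fun i => 1 + γ⁻¹ * lam i) =
        (1 : Matrix (Fin n) (Fin n) ℝ) + γ⁻¹ • diagonal lam := by
      rw [← Matrix.diagonal_one, ← Matrix.diagonal_smul, Matrix.diagonal_add]
      rfl
    rw [this, Matrix.mul_add, Matrix.add_mul, Matrix.mul_one, hUU,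
      Matrix.mul_smul, Matrix.smul_mul, ← hspec]
  have hinv : ((1 : Matrix (Fin n) (Fin n) ℝ) + γ⁻¹ • L)⁻¹ =
      U * diagonal (fun i => (1 + γ⁻¹ * lam i)⁻¹) * star U := by
    apply Matrix.inv_eq_right_inv
    rw [hM]
    calc U * diagonal (fun i => 1 + γ⁻¹ * lam i) * star U *
          (U * diagonal (fun i => (1 + γ⁻¹ * lam i)⁻¹) * star U)
        = U * (diagonal (fun i => 1 + γ⁻¹ * lam i) * ((star U * U) *
            diagonal (fun i => (1 + γ⁻¹ * lam i)⁻¹))) * star U := by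
          simp only [Matrix.mul_assoc]
      _ = 1 := by
          rw [hUU', Matrix.one_mul, Matrix.diagonal_mul_diagonal]
          have : (fun i => (1 + γ⁻¹ * lam i) * (1 + γ⁻¹ * lam i)⁻¹) = fun _ => (1:ℝ) := by
            ext i; exact mul_inv_cancel₀ (hpos i).ne'
          rw [this, Matrix.diagonal_one, Matrix.mul_one, hUU]
  set c := star U *ᵥ v with hc
  have hquad : v ⬝ᵥ ((U * diagonal (fun i => (1 + γ⁻¹ * lam i)⁻¹) * star U) *ᵥ v) =
      ∑ i, (1 + γ⁻¹ * lam i)⁻¹ * (c i)^2 := by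
    have hvU : v ᵥ* U = c := by
      ext j
      simp [hc, Matrix.vecMul, Matrix.mulVec, dotProduct, Matrix.star_apply, mul_comm]
    rw [← Matrix.mulVec_mulVec, ← Matrix.mulVec_mulVec, Matrix.dotProduct_mulVec v U, hvU]
    simp only [Matrix.mulVec_diagonal, dotProduct, pow_two]
    exact Finset.sum_congr rfl fun i _ => by ring
  rw [hinv, hquad, Finset.mul_sum]
  congr 1; ext i; ring

lemma sum_sq_mulVec_star {n : ℕ} (U : Matrix (Fin n) (Fin n) ℝ)
    (hUU : U * star U = 1) (v : Fin n → ℝ) :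
    ∑ i, ((star U *ᵥ v) i)^2 = v ⬝ᵥ v := by
  have hstar : star U = Uᵀ := by
    rw [Matrix.star_eq_conjTranspose, Matrix.conjTranspose_eq_transpose_of_trivial]
  have h2 : (star U *ᵥ v) ᵥ* star U = v := by
    rw [hstar, Matrix.vecMul_transpose, Matrix.mulVec_mulVec, ← hstar, hUU, Matrix.one_mulVec]
  have h : (star U *ᵥ v) ⬝ᵥ (star U *ᵥ v) = v ⬝ᵥ v := by
    rw [Matrix.dotProduct_mulVec, h2]
  rw [← h]
  simp [dotProduct, pow_two]

theorem stmt17 {n : ℕ} (L : Matrix (Fin n) (Fin n) ℝ)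
    (hL : L.PosSemidef) (hL1 : L *ᵥ 1 = 0)
    (s : Fin n → ℝ) (R : ℝ) (hs : Real.sqrt (s ⬝ᵥ s) ≤ R)
    (α β : ℝ) (hα : 0 < α) (hαβ : α ≤ β) :
    let sb := s - ((s ⬝ᵥ (1 : Fin n → ℝ)) / (n : ℝ)) • (1 : Fin n → ℝ)
    let PD : ℝ → ℝ := fun γ => γ * (sb ⬝ᵥ ((1 + γ⁻¹ • L)⁻¹ *ᵥ sb))
    PD α ≤ PD β ∧ PD β - PD α ≤ (β - α) * R ^ 2 := by
  intro sb PD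
  have hβ : 0 < β := lt_of_lt_of_le hα hαβ
  have hss : (0:ℝ) ≤ s ⬝ᵥ s := Finset.sum_nonneg fun i _ => mul_self_nonneg _
  have hsR : s ⬝ᵥ s ≤ R ^ 2 := by
    have hR : 0 ≤ R := le_trans (Real.sqrt_nonneg _) hs
    calc s ⬝ᵥ s = Real.sqrt (s ⬝ᵥ s) ^ 2 := (Real.sq_sqrt hss).symm
      _ ≤ R ^ 2 := pow_le_pow_left₀ (Real.sqrt_nonneg _) hs 2
  -- sb ⬝ᵥ sb ≤ s ⬝ᵥ s
  have hsb : sb ⬝ᵥ sb ≤ s ⬝ᵥ s := by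
    rcases Nat.eq_zero_or_pos n with h0 | hn
    · subst h0
      simp [dotProduct]
    · set t := s ⬝ᵥ (1 : Fin n → ℝ) with ht
      have h11 : (1 : Fin n → ℝ) ⬝ᵥ (1 : Fin n → ℝ) = (n : ℝ) := by
        simp [dotProduct]
      have h1s : (1 : Fin n → ℝ) ⬝ᵥ s = t := by
        rw [ht]; simp [dotProduct, mul_comm]
      have hexp : sb ⬝ᵥ sb = s ⬝ᵥ s - t^2 / n := by
        show (s - (t / n) • (1:Fin n → ℝ)) ⬝ᵥ (s - (t / n) • (1:Fin n → ℝ)) = _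
        rw [sub_dotProduct, dotProduct_sub, dotProduct_sub,
          smul_dotProduct, smul_dotProduct, dotProduct_smul,
          dotProduct_smul, h11, h1s, ← ht]
        have hn' : (n : ℝ) ≠ 0 := Nat.cast_ne_zero.mpr hn.ne'
        field_simp
        linear_combination (t^2 * ((n:ℝ) * (n:ℝ)⁻¹ - 1)) * (mul_inv_cancel₀ hn')
      rw [hexp]
      have : 0 ≤ t^2 / n := by positivity
      linarith
  set lam := hL.1.eigenvalues with hlam
  set c := star (hL.1.eigenvectorUnitary : Matrix (Fin n) (Fin n) ℝ) *ᵥ sb with hc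
  have hPDα : PD α = ∑ i, (α * (1 + α⁻¹ * lam i)⁻¹) * (c i)^2 := PD_eq hL sb hα
  have hPDβ : PD β = ∑ i, (β * (1 + β⁻¹ * lam i)⁻¹) * (c i)^2 := PD_eq hL sb hβ
  have hcsum : ∑ i, (c i)^2 = sb ⬝ᵥ sb :=
    sum_sq_mulVec_star _ ((Matrix.mem_unitaryGroup_iff).mp hL.1.eigenvectorUnitary.2) sb
  constructor
  · rw [hPDα, hPDβ]
    apply Finset.sum_le_sum
    intro i _
    have := g_diff_nonneg hα hαβ (hL.eigenvalues_nonneg i)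
    nlinarith [sq_nonneg (c i)]
  · rw [hPDα, hPDβ, ← Finset.sum_sub_distrib]
    calc ∑ i, ((β * (1 + β⁻¹ * lam i)⁻¹) * (c i)^2 - (α * (1 + α⁻¹ * lam i)⁻¹) * (c i)^2)
        ≤ ∑ i, (β - α) * (c i)^2 := by
          apply Finset.sum_le_sum
          intro i _
          have := g_diff_le hα hαβ (hL.eigenvalues_nonneg i)
          nlinarith [sq_nonneg (c i)]
      _ = (β - α) * ∑ i, (c i)^2 := by rw [Finset.mul_sum]
      _ ≤ (β - α) * R ^ 2 := by
          apply mul_le_mul_of_nonneg_left _ (by linarith)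
          rw [hcsum]; exact le_trans hsb hsR
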